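/- Let M be a discrete-time Markov process with state space S and suppose there exists a probability measure π on S such that for every x ∈ S, lim_{n→∞} sup_{m ∈ ℕ} ∫_S d_W(p^n(y,·), π) p^m(x,dy) = 0. Then for every bounded Lipschitz function f : S → ℝ and every x ∈ S, lim_{n→∞} E^x[ ((1/n) Σ_{k=0}^{n-1} f(M_k))^2 ] = (∫_S f dπ)^2. -/

import Mathlib

open MeasureTheory Filter Topology

/-- The `L¹`-Wasserstein (Kantorovich–Rubinstein) distance between two measures:
`d_W(μ,ν) = sup { |∫ f dμ - ∫ f dν| : f 1-Lipschitz }`. -/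
noncomputable def wassDist {S : Type*} [MeasurableSpace S] [PseudoMetricSpace S]
    (μ ν : Measure S) : ℝ :=
  ⨆ f : {g : S → ℝ // LipschitzWith 1 g}, |(∫ y, f.1 y ∂μ) - ∫ y, f.1 y ∂ν|

section Aux

variable {S : Type} [MeasurableSpace S] [MetricSpace S] [BorelSpace S]

/-- A 1-Lipschitz function on a space of diameter ≤ 1 is bounded. -/
lemma lip_bound (hd : ∀ x y : S, dist x y ≤ 1) {f : S → ℝ} (hf : LipschitzWith 1 f)
    (s₀ z : S) : |f z| ≤ |f s₀| + 1 := by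
  have h := hf.dist_le_mul z s₀
  rw [Real.dist_eq] at h
  have h2 := hd z s₀
  have : |f z| ≤ |f s₀| + |f z - f s₀| := by
    have := abs_add_le (f s₀) (f z - f s₀); simpa using this
  simp only [NNReal.coe_one, one_mul] at h
  linarith

lemma integrable_of_bdd' {α : Type*} [MeasurableSpace α] {μ : Measure α} [IsFiniteMeasure μ]
    {f : α → ℝ} (hm : AEStronglyMeasurable f μ) {C : ℝ} (hb : ∀ z, |f z| ≤ C) :
    Integrable f μ :=
  (integrable_const C).mono' hm (ae_of_all _ (by simpa [Real.norm_eq_abs] using hb))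

lemma integrable_of_bdd {μ : Measure S} [IsFiniteMeasure μ] {f : S → ℝ}
    (hm : AEStronglyMeasurable f μ) {C : ℝ} (hb : ∀ z, |f z| ≤ C) : Integrable f μ :=
  integrable_of_bdd' hm hb

lemma nonempty_of_prob {μ : Measure S} [IsProbabilityMeasure μ] : Nonempty S := by
  by_contra h
  rw [not_nonempty_iff] at h
  have h1 : μ Set.univ = 1 := measure_univ
  rw [Set.univ_eq_empty_iff.mpr h, measure_empty] at h1
  exact zero_ne_one h1

lemma integrable_of_lip (hd : ∀ x y : S, dist x y ≤ 1) {μ : Measure S}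
    [IsProbabilityMeasure μ] {f : S → ℝ} (hf : LipschitzWith 1 f) : Integrable f μ := by
  haveI : Nonempty S := nonempty_of_prob (μ := μ)
  obtain ⟨s₀⟩ := ‹Nonempty S›
  exact integrable_of_bdd hf.continuous.measurable.aestronglyMeasurable (lip_bound hd hf s₀)

lemma abs_integral_sub_le_one (hd : ∀ x y : S, dist x y ≤ 1) {μ ν : Measure S}
    [IsProbabilityMeasure μ] [IsProbabilityMeasure ν] {f : S → ℝ} (hf : LipschitzWith 1 f) :
    |(∫ y, f y ∂μ) - ∫ y, f y ∂ν| ≤ 1 := by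
  haveI : Nonempty S := nonempty_of_prob (μ := μ)
  set b := ∫ y, f y ∂ν with hb
  have hintν : Integrable f ν := integrable_of_lip hd hf
  have hintμ : Integrable f μ := integrable_of_lip hd hf
  have key : ∀ u : S, |f u - b| ≤ 1 := by
    intro u
    have h1 : f u - b = ∫ v, (f u - f v) ∂ν := by
      rw [integral_sub (integrable_const _) hintν, integral_const, probReal_univ]
      simp [hb]
    rw [h1]
    calc |∫ v, (f u - f v) ∂ν| ≤ ∫ v, |f u - f v| ∂ν := by
          simpa [Real.norm_eq_abs] using norm_integral_le_integral_norm (fun v => f u - f v) (μ := ν)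
      _ ≤ ∫ _v, (1 : ℝ) ∂ν := by
          refine integral_mono ((integrable_const _).sub hintν).abs (integrable_const _) ?_
          intro v
          have h3 := hf.dist_le_mul u v
          rw [Real.dist_eq] at h3
          simp only [NNReal.coe_one, one_mul] at h3
          exact h3.trans (hd u v)
      _ = 1 := by simp
  have h1 : (∫ y, f y ∂μ) - b = ∫ y, (f y - b) ∂μ := by
    rw [integral_sub hintμ (integrable_const _), integral_const, probReal_univ]; simp
  rw [h1]
  calc |∫ y, (f y - b) ∂μ| ≤ ∫ y, |f y - b| ∂μ := by
        simpa [Real.norm_eq_abs] using norm_integral_le_integral_norm (fun y => f y - b) (μ := μ)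
    _ ≤ ∫ _y, (1 : ℝ) ∂μ := by
        refine integral_mono (hintμ.sub (integrable_const _)).abs (integrable_const _) ?_
        exact key
    _ = 1 := by simp

lemma bddAbove_wass (hd : ∀ x y : S, dist x y ≤ 1) (μ ν : Measure S)
    [IsProbabilityMeasure μ] [IsProbabilityMeasure ν] :
    BddAbove (Set.range fun f : {g : S → ℝ // LipschitzWith 1 g} =>
      |(∫ y, f.1 y ∂μ) - ∫ y, f.1 y ∂ν|) := by
  refine ⟨1, ?_⟩
  rintro r ⟨f, rfl⟩
  exact abs_integral_sub_le_one hd f.2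

lemma wassDist_nonneg (μ ν : Measure S) : 0 ≤ wassDist μ ν :=
  Real.iSup_nonneg fun _ => abs_nonneg _

lemma wassDist_le_one (hd : ∀ x y : S, dist x y ≤ 1) (μ ν : Measure S)
    [IsProbabilityMeasure μ] [IsProbabilityMeasure ν] : wassDist μ ν ≤ 1 := by
  haveI : Nonempty {g : S → ℝ // LipschitzWith 1 g} := ⟨⟨fun _ => 0, (LipschitzWith.const' 0).weaken (zero_le_one)⟩⟩
  exact ciSup_le fun f => abs_integral_sub_le_one hd f.2

lemma abs_le_wassDist (hd : ∀ x y : S, dist x y ≤ 1) (μ ν : Measure S)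
    [IsProbabilityMeasure μ] [IsProbabilityMeasure ν] {f : S → ℝ} (hf : LipschitzWith 1 f) :
    |(∫ y, f y ∂μ) - ∫ y, f y ∂ν| ≤ wassDist μ ν :=
  le_ciSup (bddAbove_wass hd μ ν) (⟨f, hf⟩ : {g : S → ℝ // LipschitzWith 1 g})

lemma abs_le_K_mul_wassDist (hd : ∀ x y : S, dist x y ≤ 1) (μ ν : Measure S)
    [IsProbabilityMeasure μ] [IsProbabilityMeasure ν] {f : S → ℝ} {K : NNReal} (hK : K ≠ 0)
    (hf : LipschitzWith K f) :
    |(∫ y, f y ∂μ) - ∫ y, f y ∂ν| ≤ (K : ℝ) * wassDist μ ν := by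
  have hKpos : (0 : ℝ) < K := by
    exact_mod_cast pos_iff_ne_zero.mpr hK
  have hf' : LipschitzWith 1 fun z => (K : ℝ)⁻¹ * f z := by
    refine LipschitzWith.of_dist_le_mul fun u v => ?_
    have h3 := hf.dist_le_mul u v
    rw [Real.dist_eq] at h3 ⊢
    rw [← mul_sub, abs_mul, abs_inv, abs_of_nonneg K.coe_nonneg]
    calc (K:ℝ)⁻¹ * |f u - f v| ≤ (K:ℝ)⁻¹ * ((K:ℝ) * dist u v) := by
          refine mul_le_mul_of_nonneg_left h3 (by positivity)
      _ = 1 * dist u v := by field_simp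
  have h1 := abs_le_wassDist hd μ ν hf'
  rw [integral_const_mul, integral_const_mul, ← mul_sub, abs_mul, abs_inv,
    abs_of_nonneg K.coe_nonneg] at h1
  calc |(∫ y, f y ∂μ) - ∫ y, f y ∂ν| = (K:ℝ) * ((K:ℝ)⁻¹ * |(∫ y, f y ∂μ) - ∫ y, f y ∂ν|) := by
        field_simp
    _ ≤ (K : ℝ) * wassDist μ ν := mul_le_mul_of_nonneg_left h1 (le_of_lt hKpos)

end Aux

section Countable

variable {S : Type} [MeasurableSpace S] [MetricSpace S] [BorelSpace S]

/-- Approximating family: `gSeq c i l x = min (2, min_{j < l.length} (l_j + dist x (c (i+j))))`. -/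
noncomputable def gSeq (c : ℕ → S) : ℕ → List ℚ → S → ℝ
  | _, [] => fun _ => 2
  | i, q :: l => fun x => min ((q : ℝ) + dist x (c i)) (gSeq c (i + 1) l x)

lemma gSeq_lipschitz (c : ℕ → S) : ∀ (l : List ℚ) (i : ℕ), LipschitzWith 1 (gSeq c i l) := by
  intro l
  induction l with
  | nil => intro i; exact (LipschitzWith.const' 2 (K := 0)).weaken zero_le_one
  | cons q l ih =>
    intro i
    have h1 : LipschitzWith 1 fun x => (q : ℝ) + dist x (c i) := by
      simpa using (LipschitzWith.const' (q : ℝ) (K := 0)).add (LipschitzWith.dist_left (c i))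
    simpa [gSeq] using h1.min (ih (i + 1))

lemma gSeq_le_two (c : ℕ → S) : ∀ (l : List ℚ) (i : ℕ) (x : S), gSeq c i l x ≤ 2 := by
  intro l
  induction l with
  | nil => intro i x; simp [gSeq]
  | cons q l ih =>
    intro i x
    exact le_trans (min_le_right _ _) (ih (i + 1) x)

lemma gSeq_le_get (c : ℕ → S) : ∀ (l : List ℚ) (i j : ℕ) (h : j < l.length) (x : S),
    gSeq c i l x ≤ (l.get ⟨j, h⟩ : ℝ) + dist x (c (i + j)) := by
  intro l
  induction l with
  | nil => intro i j h; simp at h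
  | cons q l ih =>
    intro i j h x
    cases j with
    | zero => simpa [gSeq] using min_le_left ((q : ℝ) + dist x (c i)) (gSeq c (i + 1) l x)
    | succ j =>
      have h' : j < l.length := by simpa using h
      have := ih (i + 1) j h' x
      have harith : i + 1 + j = i + (j + 1) := by omega
      rw [harith] at this
      exact le_trans (min_le_right _ _) this

lemma le_gSeq (c : ℕ → S) {f : S → ℝ} (hf : LipschitzWith 1 f) (hf2 : ∀ x, f x ≤ 2) :
    ∀ (l : List ℚ) (i : ℕ), (∀ (j : ℕ) (h : j < l.length), f (c (i + j)) ≤ (l.get ⟨j, h⟩ : ℝ)) →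
    ∀ x : S, f x ≤ gSeq c i l x := by
  intro l
  induction l with
  | nil => intro i _ x; exact hf2 x
  | cons q l ih =>
    intro i hq x
    refine le_min ?_ ?_
    · have h1 : f x ≤ f (c i) + dist x (c i) := by
        have := hf.dist_le_mul x (c i)
        rw [Real.dist_eq] at this
        simp only [NNReal.coe_one, one_mul] at this
        have h2 : f x - f (c i) ≤ dist x (c i) := by
          have h3 := le_abs_self (f x - f (c i))
          have := hf.dist_le_mul x (c i)
          rw [Real.dist_eq] at this
          simp only [NNReal.coe_one, one_mul] at this
          linarith
        linarith
      have h2 : f (c i) ≤ (q : ℝ) := by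
        have := hq 0 (by simp)
        simpa using this
      linarith
    · refine ih (i + 1) ?_ x
      intro j h
      have := hq (j + 1) (by simpa using Nat.succ_lt_succ h)
      have harith : i + (j + 1) = i + 1 + j := by omega
      rw [harith] at this
      simpa using this

lemma gSeq_append_le (c : ℕ → S) : ∀ (l l' : List ℚ) (i : ℕ) (x : S),
    gSeq c i (l ++ l') x ≤ gSeq c i l x := by
  intro l
  induction l with
  | nil => intro l' i x; simpa [gSeq] using gSeq_le_two c l' i x
  | cons q l ih =>
    intro l' i x
    exact min_le_min le_rfl (ih l' (i + 1) x)

lemma wassDist_eq_countable (hd : ∀ x y : S, dist x y ≤ 1) {c : ℕ → S} (hc : DenseRange c)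
    (μ ν : Measure S) [IsProbabilityMeasure μ] [IsProbabilityMeasure ν] :
    wassDist μ ν = ⨆ l : List ℚ, |(∫ x, gSeq c 0 l x ∂μ) - ∫ x, gSeq c 0 l x ∂ν| := by
  haveI : Nonempty S := nonempty_of_prob (μ := μ)
  have hbddD : BddAbove (Set.range fun l : List ℚ =>
      |(∫ x, gSeq c 0 l x ∂μ) - ∫ x, gSeq c 0 l x ∂ν|) := by
    refine ⟨1, ?_⟩
    rintro r ⟨l, rfl⟩
    exact abs_integral_sub_le_one hd (gSeq_lipschitz c l 0)
  haveI : Nonempty {g : S → ℝ // LipschitzWith 1 g} :=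
    ⟨⟨fun _ => 0, (LipschitzWith.const' 0).weaken zero_le_one⟩⟩
  apply le_antisymm
  · -- the hard direction
    refine ciSup_le ?_
    rintro ⟨f, hf⟩
    -- normalize f to f₀ with |f₀| ≤ 1
    set f₀ : S → ℝ := fun z => f z - f (c 0) with hf₀def
    have hf₀ : LipschitzWith 1 f₀ := by
      simpa [hf₀def] using hf.sub (LipschitzWith.const' (f (c 0)) (K := 0))
    have hf₀bd : ∀ z, |f₀ z| ≤ 1 := by
      intro z
      have := hf.dist_le_mul z (c 0)
      rw [Real.dist_eq] at this
      simp only [NNReal.coe_one, one_mul] at this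
      exact this.trans (hd z (c 0))
    have hint : ∀ (ρ : Measure S) [IsProbabilityMeasure ρ], Integrable f ρ := by
      intro ρ hρ; exact integrable_of_lip hd hf
    have heq : (∫ y, f y ∂μ) - ∫ y, f y ∂ν = (∫ y, f₀ y ∂μ) - ∫ y, f₀ y ∂ν := by
      have h1 : ∫ y, f₀ y ∂μ = (∫ y, f y ∂μ) - f (c 0) := by
        rw [hf₀def]
        rw [integral_sub (hint μ) (integrable_const _), integral_const, probReal_univ]
        simp
      have h2 : ∫ y, f₀ y ∂ν = (∫ y, f y ∂ν) - f (c 0) := by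
        rw [hf₀def]
        rw [integral_sub (hint ν) (integrable_const _), integral_const, probReal_univ]
        simp
      rw [h1, h2]; ring
    simp only []
    rw [heq]
    -- now work with f₀
    refine le_of_forall_pos_le_add ?_
    intro ε hε
    set δ : ℝ := ε / 7 with hδdef
    have hδ : 0 < δ := by positivity
    -- rational approximations of f₀ at the dense points
    have hex : ∀ i : ℕ, ∃ q : ℚ, f₀ (c i) < q ∧ (q : ℝ) < f₀ (c i) + δ := fun i =>
      exists_rat_btwn (by linarith)
    choose q hq1 hq2 using hex
    set A : ℕ → S → ℝ := fun n => gSeq c 0 (List.ofFn fun j : Fin n => q j) with hAdef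
    have hlen : ∀ n, (List.ofFn fun j : Fin n => q j).length = n := fun n => by simp
    have hget : ∀ (n j : ℕ) (h : j < (List.ofFn fun j : Fin n => q j).length),
        ((List.ofFn fun j : Fin n => q j).get ⟨j, h⟩ : ℚ) = q j := by
      intro n j h
      simp [List.get_ofFn]
    have hA_lip : ∀ n, LipschitzWith 1 (A n) := fun n => gSeq_lipschitz c _ 0
    have hA_le : ∀ n x, f₀ x ≤ A n x := by
      intro n x
      refine le_gSeq c hf₀ (fun z => by have := hf₀bd z; cases abs_le.mp this; linarith) _ 0 ?_ x
      intro j h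
      rw [hget n j h]
      simpa using (hq1 j).le
    have hA_le_two : ∀ n x, A n x ≤ 2 := fun n x => gSeq_le_two c _ 0 x
    have hA_abs : ∀ n x, |A n x| ≤ 2 := by
      intro n x
      rw [abs_le]
      constructor
      · have h1 := hA_le n x
        have h2 := hf₀bd x
        cases abs_le.mp h2; linarith
      · exact hA_le_two n x
    have hA_anti : ∀ x, Antitone fun n => A n x := by
      intro x
      refine antitone_nat_of_succ_le fun n => ?_
      have hofn : (List.ofFn fun j : Fin (n + 1) => q j)
          = (List.ofFn fun j : Fin n => q j) ++ [q n] := by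
        rw [List.ofFn_succ']
        simp [List.concat_eq_append]
      simp only [hAdef]
      rw [hofn]
      exact gSeq_append_le c _ _ 0 x
    -- pointwise limit
    set h : S → ℝ := fun x => ⨅ n, A n x with hhdef
    have hbddB : ∀ x, BddBelow (Set.range fun n => A n x) := by
      intro x
      refine ⟨f₀ x, ?_⟩
      rintro r ⟨n, rfl⟩
      exact hA_le n x
    have h_tendsto : ∀ x, Tendsto (fun n => A n x) atTop (𝓝 (h x)) := fun x =>
      tendsto_atTop_ciInf (hA_anti x) (hbddB x)
    have h_ge : ∀ x, f₀ x ≤ h x := fun x => le_ciInf fun n => hA_le n x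
    have h_le : ∀ x, h x ≤ f₀ x + 3 * δ := by
      intro x
      obtain ⟨i, hi⟩ := hc.exists_dist_lt x hδ
      have h1 : h x ≤ A (i + 1) x := ciInf_le (hbddB x) (i + 1)
      have h2 : A (i + 1) x ≤ (q i : ℝ) + dist x (c i) := by
        have h3 := gSeq_le_get c (List.ofFn fun j : Fin (i + 1) => q j) 0 i
          (by rw [hlen]; omega) x
        rw [hget (i + 1) i _] at h3
        simpa only [Nat.zero_add] using h3
      have h4 : (q i : ℝ) < f₀ (c i) + δ := hq2 i
      have h5 : f₀ (c i) ≤ f₀ x + dist x (c i) := by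
        have := hf₀.dist_le_mul (c i) x
        rw [Real.dist_eq] at this
        simp only [NNReal.coe_one, one_mul] at this
        have h6 := le_abs_self (f₀ (c i) - f₀ x)
        rw [dist_comm] at this
        linarith
      linarith
    -- dominated convergence
    have hconv_int : ∀ (ρ : Measure S) [IsProbabilityMeasure ρ],
        Tendsto (fun n => ∫ x, A n x ∂ρ) atTop (𝓝 (∫ x, h x ∂ρ)) := by
      intro ρ hρ
      refine tendsto_integral_of_dominated_convergence (fun _ => 2)
        (fun n => (hA_lip n).continuous.measurable.aestronglyMeasurable)
        (integrable_const _) (fun n => ae_of_all _ fun x => ?_) (ae_of_all _ h_tendsto)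
      simpa [Real.norm_eq_abs] using hA_abs n x
    have hhmeas : ∀ (ρ : Measure S), AEStronglyMeasurable h ρ := by
      intro ρ
      exact aestronglyMeasurable_of_tendsto_ae atTop
        (fun n => (hA_lip n).continuous.measurable.aestronglyMeasurable)
        (ae_of_all _ h_tendsto)
    have hhabs : ∀ x, |h x| ≤ 2 := by
      intro x
      rw [abs_le]
      constructor
      · have h1 := h_ge x
        have h2 := hf₀bd x
        cases abs_le.mp h2; linarith
      · have := h_le x
        have h2 := hf₀bd x
        have h3 := abs_le.mp h2
        have : h x ≤ A 0 x := ciInf_le (hbddB x) 0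
        calc h x ≤ A 0 x := this
          _ ≤ 2 := hA_le_two 0 x
    have hhint : ∀ (ρ : Measure S) [IsProbabilityMeasure ρ], Integrable h ρ := by
      intro ρ hρ
      exact integrable_of_bdd (hhmeas ρ) hhabs
    have hf₀int : ∀ (ρ : Measure S) [IsProbabilityMeasure ρ], Integrable f₀ ρ := by
      intro ρ hρ
      exact integrable_of_lip hd hf₀
    -- each ∫ A n dμ - ∫ A n dν is at most the countable sup
    have hAD : ∀ n, |(∫ x, A n x ∂μ) - ∫ x, A n x ∂ν|
        ≤ ⨆ l : List ℚ, |(∫ x, gSeq c 0 l x ∂μ) - ∫ x, gSeq c 0 l x ∂ν| :=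
      fun n => le_ciSup hbddD (List.ofFn fun j : Fin n => q j)
    have hhD : |(∫ x, h x ∂μ) - ∫ x, h x ∂ν|
        ≤ ⨆ l : List ℚ, |(∫ x, gSeq c 0 l x ∂μ) - ∫ x, gSeq c 0 l x ∂ν| := by
      have ht : Tendsto (fun n => |(∫ x, A n x ∂μ) - ∫ x, A n x ∂ν|) atTop
          (𝓝 |(∫ x, h x ∂μ) - ∫ x, h x ∂ν|) := ((hconv_int μ).sub (hconv_int ν)).abs
      exact le_of_tendsto ht (Eventually.of_forall hAD)
    -- error bounds
    have herr : ∀ (ρ : Measure S) [IsProbabilityMeasure ρ],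
        |(∫ x, h x ∂ρ) - ∫ x, f₀ x ∂ρ| ≤ 3 * δ := by
      intro ρ hρ
      have h1 : (∫ x, h x ∂ρ) - ∫ x, f₀ x ∂ρ = ∫ x, (h x - f₀ x) ∂ρ := by
        rw [integral_sub (hhint ρ) (hf₀int ρ)]
      rw [h1, abs_of_nonneg (integral_nonneg fun x => sub_nonneg.mpr (h_ge x))]
      have hb : ∀ x, h x - f₀ x ≤ 3 * δ := fun x => by linarith [h_le x, h_ge x]
      calc ∫ x, (h x - f₀ x) ∂ρ ≤ ∫ _x, (3 * δ : ℝ) ∂ρ :=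
            integral_mono ((hhint ρ).sub (hf₀int ρ)) (integrable_const (3 * δ)) hb
      _ = 3 * δ := by simp
    have hfinal : |(∫ y, f₀ y ∂μ) - ∫ y, f₀ y ∂ν|
        ≤ |(∫ x, h x ∂μ) - ∫ x, h x ∂ν| + 3 * δ + 3 * δ := by
      have e1 := herr μ
      have e2 := herr ν
      have t1 := abs_le.mp e1
      have t2 := abs_le.mp e2
      rw [abs_le]
      constructor
      · have := abs_le.mp (le_refl |(∫ x, h x ∂μ) - ∫ x, h x ∂ν|)
        have hh := neg_abs_le ((∫ x, h x ∂μ) - ∫ x, h x ∂ν)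
        obtain ⟨t1a, t1b⟩ := t1
        obtain ⟨t2a, t2b⟩ := t2
        linarith
      · have hh := le_abs_self ((∫ x, h x ∂μ) - ∫ x, h x ∂ν)
        obtain ⟨t1a, t1b⟩ := t1
        obtain ⟨t2a, t2b⟩ := t2
        linarith
    calc |(∫ y, f₀ y ∂μ) - ∫ y, f₀ y ∂ν|
        ≤ |(∫ x, h x ∂μ) - ∫ x, h x ∂ν| + 3 * δ + 3 * δ := hfinal
      _ ≤ (⨆ l : List ℚ, |(∫ x, gSeq c 0 l x ∂μ) - ∫ x, gSeq c 0 l x ∂ν|) + 6 * δ := by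
          linarith
      _ ≤ (⨆ l : List ℚ, |(∫ x, gSeq c 0 l x ∂μ) - ∫ x, gSeq c 0 l x ∂ν|) + ε := by
          rw [hδdef]; linarith
  · refine ciSup_le fun l => ?_
    exact abs_le_wassDist hd μ ν (gSeq_lipschitz c l 0)

end Countable

/-- A (normal, temporally homogeneous) discrete-time Markov process: a family of probability
measures `P x` on a sample space `Ω` depending measurably on the starting point `x`, a process
`M` such that `M 0 = x` holds `P x`-a.s., satisfying the Markov property with respect to the
natural filtration, with temporally homogeneous transition function `(P x).map (M t)`. -/
structure DiscreteMarkovProcess (S : Type*) [MeasurableSpace S]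
    (Ω : Type*) [MeasurableSpace Ω] where
  P : S → Measure Ω
  M : ℕ → Ω → S
  prob : ∀ x, IsProbabilityMeasure (P x)
  measM : ∀ n, Measurable (M n)
  measP : Measurable P
  start : ∀ x, (P x).map (M 0) = Measure.dirac x
  markov : ∀ (x : S) (s t : ℕ) (g : S → ℝ), Measurable g → (∃ C, ∀ z, |g z| ≤ C) →
    (P x)[(fun ω => g (M (s + t) ω)) |
        ⨆ u : {u : ℕ // u ≤ s}, MeasurableSpace.comap (M u.1) inferInstance]
      =ᵐ[P x] fun ω => ∫ y, g y ∂((P (M s ω)).map (M t))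

/-- The transition function `p t x (dy) = P^x (M_t ∈ dy)` of a discrete-time Markov process. -/
noncomputable def DiscreteMarkovProcess.p {S : Type*} [MeasurableSpace S]
    {Ω : Type*} [MeasurableSpace Ω] (X : DiscreteMarkovProcess S Ω) (n : ℕ) (x : S) :
    Measure S := (X.P x).map (X.M n)

section Markov

variable {S : Type} [MeasurableSpace S] [MetricSpace S] [PolishSpace S] [BorelSpace S]
variable {Ω : Type} [MeasurableSpace Ω] (X : DiscreteMarkovProcess S Ω)

lemma prob_p (n : ℕ) (y : S) : IsProbabilityMeasure (X.p n y) := by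
  haveI := X.prob y
  exact Measure.isProbabilityMeasure_map (X.measM n).aemeasurable

lemma measurable_p (n : ℕ) : Measurable fun y => X.p n y :=
  (Measure.measurable_map _ (X.measM n)).comp X.measP

lemma measurable_integral_p (t : ℕ) (g : S → ℝ) (hg : Measurable g) :
    Measurable fun y => ∫ z, g z ∂(X.p t y) := by
  let κ : ProbabilityTheory.Kernel S S := ⟨fun y => X.p t y, measurable_p X t⟩
  haveI : ProbabilityTheory.IsMarkovKernel κ := ⟨fun y => prob_p X t y⟩
  have h : StronglyMeasurable fun y => ∫ z, (fun (_ : S) (z : S) => g z) y z ∂κ y :=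
    MeasureTheory.StronglyMeasurable.integral_kernel_prod_right
      ((hg.comp measurable_snd).stronglyMeasurable)
  exact h.measurable

lemma measurable_wass (hd : ∀ x y : S, dist x y ≤ 1) (π : Measure S) [IsProbabilityMeasure π]
    {c : ℕ → S} (hc : DenseRange c) (n : ℕ) :
    Measurable fun y => wassDist (X.p n y) π := by
  have heq : (fun y => wassDist (X.p n y) π)
      = fun y => ⨆ l : List ℚ, |(∫ z, gSeq c 0 l z ∂(X.p n y)) - ∫ z, gSeq c 0 l z ∂π| := by
    funext y
    haveI := prob_p X n y
    exact wassDist_eq_countable hd hc _ π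
  rw [heq]
  exact Measurable.iSup fun l =>
    ((measurable_integral_p X n _ (gSeq_lipschitz c l 0).continuous.measurable).sub
      measurable_const).abs

/-- The natural filtration at time `s`. -/
def natFilt {S Ω : Type} [MeasurableSpace S] (M : ℕ → Ω → S) (s : ℕ) : MeasurableSpace Ω :=
  ⨆ u : {u : ℕ // u ≤ s}, MeasurableSpace.comap (M u.1) inferInstance

/-- Key consequence of the Markov property. -/
lemma markov_mul (x : S) (s t : ℕ) (f g : S → ℝ) (hf : Measurable f) (hg : Measurable g)
    {Cf Cg : ℝ} (hCf : ∀ z, |f z| ≤ Cf) (hCg : ∀ z, |g z| ≤ Cg) :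
    ∫ ω, f (X.M s ω) * g (X.M (s + t) ω) ∂(X.P x)
      = ∫ ω, f (X.M s ω) * (∫ y, g y ∂(X.p t (X.M s ω))) ∂(X.P x) := by
  haveI := X.prob x
  have hm : natFilt X.M s ≤ ‹MeasurableSpace Ω› := iSup_le fun u => (X.measM u.1).comap_le
  have hF : StronglyMeasurable[natFilt X.M s] fun ω => f (X.M s ω) := by
    have h1 : Measurable[MeasurableSpace.comap (X.M s) inferInstance] (X.M s) := fun _ hs =>
      ⟨_, hs, rfl⟩
    have h2 : MeasurableSpace.comap (X.M s) inferInstance ≤ natFilt X.M s :=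
      le_iSup (fun u : {u : ℕ // u ≤ s} => MeasurableSpace.comap (X.M u.1) inferInstance)
        ⟨s, le_rfl⟩
    exact ((hf.comp h1).mono h2 le_rfl).stronglyMeasurable
  have hG : Integrable (fun ω => g (X.M (s + t) ω)) (X.P x) :=
    integrable_of_bdd' ((hg.comp (X.measM (s + t))).aestronglyMeasurable) (fun ω => hCg (X.M (s + t) ω))
  have hFG : Integrable (fun ω => f (X.M s ω) * g (X.M (s + t) ω)) (X.P x) := by
    refine integrable_of_bdd' (((hf.comp (X.measM s)).mul
      (hg.comp (X.measM (s + t)))).aestronglyMeasurable) (C := |Cf| * |Cg|) fun ω => ?_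
    rw [abs_mul]
    exact mul_le_mul ((hCf _).trans (le_abs_self _)) ((hCg _).trans (le_abs_self _))
      (abs_nonneg _) (abs_nonneg _)
  have hmul := condExp_mul_of_stronglyMeasurable_left (m := natFilt X.M s) (μ := X.P x) hF
    (by simpa [Pi.mul_def] using hFG) hG
  have hmarkov := X.markov x s t g hg ⟨Cg, hCg⟩
  rw [show (⨆ u : {u : ℕ // u ≤ s}, MeasurableSpace.comap (X.M u.1) inferInstance)
      = natFilt X.M s from rfl] at hmarkov
  calc ∫ ω, f (X.M s ω) * g (X.M (s + t) ω) ∂(X.P x)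
      = ∫ ω, ((X.P x)[(fun ω => f (X.M s ω)) * fun ω => g (X.M (s + t) ω)|natFilt X.M s]) ω ∂(X.P x) := by
        rw [integral_condExp hm]
        simp [Pi.mul_def]
    _ = ∫ ω, ((fun ω => f (X.M s ω)) * (X.P x)[fun ω => g (X.M (s + t) ω)|natFilt X.M s]) ω ∂(X.P x) :=
        integral_congr_ae hmul
    _ = ∫ ω, f (X.M s ω) * (∫ y, g y ∂(X.p t (X.M s ω))) ∂(X.P x) := by
        refine integral_congr_ae ?_
        filter_upwards [hmarkov] with ω hω
        simp only [Pi.mul_apply]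
        rw [hω]
        rfl

end Markov

section SumHelpers

lemma sum_comp_le (n : ℕ) (g : ℕ → ℝ) (hg : ∀ t, 0 ≤ g t) (A : Finset ℕ) (σ : ℕ → ℕ)
    (hinj : ∀ a ∈ A, ∀ b ∈ A, σ a = σ b → a = b)
    (hmaps : ∀ k ∈ A, σ k ∈ Finset.range n) :
    ∑ k ∈ A, g (σ k) ≤ ∑ t ∈ Finset.range n, g t := by
  classical
  rw [← Finset.sum_image hinj]
  exact Finset.sum_le_sum_of_subset_of_nonneg (Finset.image_subset_iff.mpr hmaps)
    fun i _ _ => hg i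

lemma sum_dist_le (n j : ℕ) (hj : j < n) (g : ℕ → ℝ) (hg : ∀ t, 0 ≤ g t) :
    ∑ k ∈ Finset.range n, g (Nat.dist j k) ≤ 2 * ∑ t ∈ Finset.range n, g t := by
  classical
  rw [← Finset.sum_filter_add_sum_filter_not (Finset.range n) (fun k => j ≤ k), two_mul]
  have h1 : ∑ k ∈ (Finset.range n).filter (fun k => j ≤ k), g (Nat.dist j k)
      ≤ ∑ t ∈ Finset.range n, g t := by
    have hcong : ∀ k ∈ (Finset.range n).filter (fun k => j ≤ k),
        g (Nat.dist j k) = g (k - j) := by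
      intro k hk
      simp only [Finset.mem_filter, Finset.mem_range] at hk
      rw [Nat.dist_eq_sub_of_le hk.2]
    rw [Finset.sum_congr rfl hcong]
    refine sum_comp_le n g hg _ (fun a => a - j) ?_ ?_
    · intro a ha b hb hab
      simp only [Finset.mem_filter, Finset.mem_range] at ha hb
      omega
    · intro k hk
      simp only [Finset.mem_filter, Finset.mem_range] at hk
      simp only [Finset.mem_range]
      omega
  have h2 : ∑ k ∈ (Finset.range n).filter (fun k => ¬ j ≤ k), g (Nat.dist j k)
      ≤ ∑ t ∈ Finset.range n, g t := by
    have hcong : ∀ k ∈ (Finset.range n).filter (fun k => ¬ j ≤ k),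
        g (Nat.dist j k) = g (j - k) := by
      intro k hk
      simp only [Finset.mem_filter, Finset.mem_range, not_le] at hk
      rw [Nat.dist_comm, Nat.dist_eq_sub_of_le hk.2.le]
    rw [Finset.sum_congr rfl hcong]
    refine sum_comp_le n g hg _ (fun a => j - a) ?_ ?_
    · intro a ha b hb hab
      simp only [Finset.mem_filter, Finset.mem_range, not_le] at ha hb
      omega
    · intro k hk
      simp only [Finset.mem_filter, Finset.mem_range, not_le] at hk
      simp only [Finset.mem_range]
      omega
  linarith

end SumHelpers

/-- Under the hypothesis `lim_n sup_m ∫ d_W(p^n(y,·),π) p^m(x,dy) = 0`, for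
every bounded Lipschitz `f` and every `x`,
`lim_n E^x[((1/n) ∑_{k<n} f(M_k))²] = (∫ f dπ)²`. -/
theorem birkhoff_discrete_second_moment
    {S : Type} [MeasurableSpace S] [MetricSpace S] [PolishSpace S] [BorelSpace S]
    (hd : ∀ x y : S, dist x y ≤ 1)
    {Ω : Type} [MeasurableSpace Ω] (X : DiscreteMarkovProcess S Ω)
    (π : Measure S) [IsProbabilityMeasure π]
    (hconv : ∀ x : S, Tendsto
      (fun n : ℕ => ⨆ m : ℕ, ∫ y, wassDist (X.p n y) π ∂(X.p m x)) atTop (𝓝 0))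
    (f : S → ℝ) (hfl : ∃ K : NNReal, LipschitzWith K f) (hfb : ∃ C : ℝ, ∀ z : S, |f z| ≤ C)
    (x : S) :
    Tendsto
      (fun n : ℕ => ∫ ω, ((n : ℝ)⁻¹ * (∑ k ∈ Finset.range n, f (X.M k ω))) ^ 2 ∂(X.P x))
      atTop (𝓝 ((∫ y, f y ∂π) ^ 2)) := by
  classical
  haveI := X.prob x
  haveI : Nonempty S := ⟨x⟩
  obtain ⟨c, hc⟩ := TopologicalSpace.exists_dense_seq S
  obtain ⟨K₀, hK₀⟩ := hfl
  obtain ⟨C₀, hC₀⟩ := hfb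
  set K : NNReal := max K₀ 1 with hKdef
  have hK : LipschitzWith K f := hK₀.weaken (le_max_left _ _)
  have hK1 : (1 : NNReal) ≤ K := le_max_right _ _
  have hKne : K ≠ 0 := fun h => by rw [h] at hK1; exact (by norm_num : ¬ (1:NNReal) ≤ 0) hK1
  have hKpos : (0 : ℝ) < K := by exact_mod_cast pos_iff_ne_zero.mpr hKne
  set C : ℝ := max C₀ 1 with hCdef
  have hC : ∀ z, |f z| ≤ C := fun z => (hC₀ z).trans (le_max_left _ _)
  have hC1 : (1 : ℝ) ≤ C := le_max_right _ _
  have hC0 : (0 : ℝ) ≤ C := by linarith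
  have hmf : Measurable f := hK.continuous.measurable
  set a : ℝ := ∫ y, f y ∂π with hadef
  set W : ℕ → S → ℝ := fun n y => wassDist (X.p n y) π with hWdef
  have hWmeas : ∀ n, Measurable (W n) := fun n => measurable_wass X hd π hc n
  have hWnonneg : ∀ n y, 0 ≤ W n y := fun n y => wassDist_nonneg _ _
  have hWle : ∀ n y, W n y ≤ 1 := fun n y => by
    haveI := prob_p X n y
    exact wassDist_le_one hd _ _
  set φ : ℕ → ℝ := fun n => ⨆ m : ℕ, ∫ y, W n y ∂(X.p m x) with hφdef
  have hφ0 : Tendsto φ atTop (𝓝 0) := hconv x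
  have hφnonneg : ∀ n, 0 ≤ φ n := fun n =>
    Real.iSup_nonneg fun m => integral_nonneg fun y => hWnonneg n y
  have hWint : ∀ n m, Integrable (W n) (X.p m x) := fun n m => by
    haveI := prob_p X m x
    exact integrable_of_bdd ((hWmeas n).aestronglyMeasurable) (C := 1)
      fun z => abs_le.mpr ⟨by linarith [hWnonneg n z], hWle n z⟩
  have hWint_le : ∀ n m, ∫ y, W n y ∂(X.p m x) ≤ 1 := fun n m => by
    haveI := prob_p X m x
    calc ∫ y, W n y ∂(X.p m x) ≤ ∫ _y, (1:ℝ) ∂(X.p m x) :=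
          integral_mono (hWint n m) (integrable_const _) (hWle n)
      _ = 1 := by simp
  have hIle : ∀ n m, ∫ y, W n y ∂(X.p m x) ≤ φ n := by
    intro n m
    have hb : BddAbove (Set.range fun m' : ℕ => ∫ y, W n y ∂(X.p m' x)) :=
      ⟨1, by rintro r ⟨m', rfl⟩; exact hWint_le n m'⟩
    exact le_ciSup hb m
  -- the evolved averages of f
  set Pf : ℕ → S → ℝ := fun t z => ∫ y, f y ∂(X.p t z) with hPfdef
  have hPf_meas : ∀ t, Measurable (Pf t) := fun t => measurable_integral_p X t f hmf
  have hfint : ∀ (ρ : Measure S) [IsProbabilityMeasure ρ], Integrable f ρ := fun ρ hρ =>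
    integrable_of_bdd (hmf.aestronglyMeasurable) hC
  have hPf_bd : ∀ t z, |Pf t z| ≤ C := by
    intro t z
    haveI := prob_p X t z
    calc |Pf t z| ≤ ∫ y, |f y| ∂(X.p t z) := by
          simpa [Real.norm_eq_abs] using norm_integral_le_integral_norm f (μ := X.p t z)
      _ ≤ ∫ _y, C ∂(X.p t z) := integral_mono (hfint _).abs (integrable_const _) hC
      _ = C := by simp
  have ha_bd : |a| ≤ C := by
    rw [hadef]
    calc |∫ y, f y ∂π| ≤ ∫ y, |f y| ∂π := by
          simpa [Real.norm_eq_abs] using norm_integral_le_integral_norm f (μ := π)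
      _ ≤ ∫ _y, C ∂π := integral_mono (hfint _).abs (integrable_const _) hC
      _ = C := by simp
  have hPfW : ∀ t z, |Pf t z - a| ≤ (K : ℝ) * W t z := by
    intro t z
    haveI := prob_p X t z
    exact abs_le_K_mul_wassDist hd (X.p t z) π hKne hK
  -- the correlations
  set u : ℕ → ℕ → ℝ := fun j k => ∫ ω, f (X.M j ω) * f (X.M k ω) ∂(X.P x) with hudef
  have husymm : ∀ j k, u j k = u k j := by
    intro j k
    simp only [hudef]
    congr 1
    funext ω
    ring
  have hint_fM : ∀ s : ℕ, Integrable (fun ω => f (X.M s ω)) (X.P x) := fun s =>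
    integrable_of_bdd' ((hmf.comp (X.measM s)).aestronglyMeasurable) fun ω => hC _
  have hmap : ∀ (s : ℕ) (h : S → ℝ), Measurable h →
      (∫ ω, h (X.M s ω) ∂(X.P x)) = ∫ y, h y ∂(X.p s x) := fun s h hh =>
    (integral_map (X.measM s).aemeasurable hh.aestronglyMeasurable).symm
  have key : ∀ s t : ℕ, |u s (s + t) - a ^ 2| ≤ C * K * φ t + C * K * φ s := by
    intro s t
    have hmm := markov_mul X x s t f f hmf hmf hC hC
    have hPfM_int : Integrable (fun ω => f (X.M s ω) * Pf t (X.M s ω)) (X.P x) :=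
      integrable_of_bdd' (((hmf.comp (X.measM s)).mul
        ((hPf_meas t).comp (X.measM s))).aestronglyMeasurable) (C := C * C)
        fun ω => by
          rw [abs_mul]
          exact mul_le_mul (hC _) (hPf_bd t _) (abs_nonneg _) hC0
    have hWM_int : Integrable (fun ω => W t (X.M s ω)) (X.P x) :=
      integrable_of_bdd' (((hWmeas t).comp (X.measM s)).aestronglyMeasurable) (C := 1)
        fun ω => abs_le.mpr ⟨by linarith [hWnonneg t (X.M s ω)], hWle t _⟩
    have step1 : |u s (s + t) - a * ∫ ω, f (X.M s ω) ∂(X.P x)| ≤ C * K * φ t := by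
      have hfa_int : Integrable (fun ω => f (X.M s ω) * a) (X.P x) := (hint_fM s).mul_const a
      have heq2 : u s (s + t) - a * ∫ ω, f (X.M s ω) ∂(X.P x)
          = ∫ ω, f (X.M s ω) * (Pf t (X.M s ω) - a) ∂(X.P x) := by
        have e1 : u s (s + t) = ∫ ω, f (X.M s ω) * Pf t (X.M s ω) ∂(X.P x) := hmm
        have e2 : a * ∫ ω, f (X.M s ω) ∂(X.P x) = ∫ ω, f (X.M s ω) * a ∂(X.P x) := by
          rw [integral_mul_const]
          ring
        rw [e1, e2, ← integral_sub hPfM_int hfa_int]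
        congr 1
        funext ω
        ring
      rw [heq2]
      have hint1 : Integrable (fun ω => |f (X.M s ω)| * |Pf t (X.M s ω) - a|) (X.P x) := by
        refine (hPfM_int.sub hfa_int).abs.congr (ae_of_all _ fun ω => ?_)
        simp only [Pi.sub_apply]
        rw [← abs_mul]
        congr 1
        ring
      calc |∫ ω, f (X.M s ω) * (Pf t (X.M s ω) - a) ∂(X.P x)|
          ≤ ∫ ω, |f (X.M s ω)| * |Pf t (X.M s ω) - a| ∂(X.P x) := by
            simpa [Real.norm_eq_abs, abs_mul] using
              norm_integral_le_integral_norm (fun ω => f (X.M s ω) * (Pf t (X.M s ω) - a))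
                (μ := X.P x)
        _ ≤ ∫ ω, C * ((K : ℝ) * W t (X.M s ω)) ∂(X.P x) := by
            refine integral_mono hint1 ((hWM_int.const_mul _).const_mul _) fun ω => ?_
            exact mul_le_mul (hC _) (hPfW t _) (abs_nonneg _) hC0
        _ = C * K * ∫ ω, W t (X.M s ω) ∂(X.P x) := by
            rw [integral_const_mul, integral_const_mul]
            ring
        _ = C * K * ∫ y, W t y ∂(X.p s x) := by rw [hmap s (W t) (hWmeas t)]
        _ ≤ C * K * φ t := by
            have h5 := hIle t s
            have h6 : (0:ℝ) ≤ C * K := by positivity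
            exact mul_le_mul_of_nonneg_left h5 h6
    have step2 : |a * (∫ ω, f (X.M s ω) ∂(X.P x)) - a ^ 2| ≤ C * K * φ s := by
      have h1 : ∫ ω, f (X.M s ω) ∂(X.P x) = Pf s x := hmap s f hmf
      rw [h1]
      have h2 : |Pf s x - a| ≤ (K : ℝ) * W s x := hPfW s x
      have h3 : W s x ≤ φ s := by
        have h4 : ∫ y, W s y ∂(X.p 0 x) = W s x := by
          rw [show X.p 0 x = Measure.dirac x from X.start x, integral_dirac]
        calc W s x = ∫ y, W s y ∂(X.p 0 x) := h4.symm
          _ ≤ φ s := hIle s 0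
      calc |a * Pf s x - a ^ 2| = |a| * |Pf s x - a| := by
            rw [← abs_mul]
            ring_nf
        _ ≤ C * ((K : ℝ) * φ s) := by
            refine mul_le_mul ha_bd (h2.trans ?_) (abs_nonneg _) hC0
            exact mul_le_mul_of_nonneg_left h3 K.coe_nonneg
        _ = C * K * φ s := by ring
    calc |u s (s + t) - a ^ 2|
        ≤ |u s (s + t) - a * ∫ ω, f (X.M s ω) ∂(X.P x)|
          + |a * (∫ ω, f (X.M s ω) ∂(X.P x)) - a ^ 2| :=
          abs_sub_le _ _ _
      _ ≤ C * K * φ t + C * K * φ s := add_le_add step1 step2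
  have key2 : ∀ j k, |u j k - a ^ 2| ≤ C * K * (φ (Nat.dist j k) + φ j + φ k) := by
    intro j k
    have hCK : (0:ℝ) ≤ C * K := by positivity
    rcases le_total j k with h | h
    · have hk := key j (k - j)
      rw [Nat.add_sub_cancel' h] at hk
      rw [Nat.dist_eq_sub_of_le h]
      have hq : (0:ℝ) ≤ C * K * φ k := mul_nonneg hCK (hφnonneg k)
      have expand : C * K * (φ (k - j) + φ j + φ k)
          = C * K * φ (k - j) + C * K * φ j + C * K * φ k := by ring
      linarith
    · have hk := key k (j - k)
      rw [Nat.add_sub_cancel' h] at hk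
      rw [husymm j k, Nat.dist_comm, Nat.dist_eq_sub_of_le h]
      have hq : (0:ℝ) ≤ C * K * φ j := mul_nonneg hCK (hφnonneg j)
      have expand : C * K * (φ (j - k) + φ j + φ k)
          = C * K * φ (j - k) + C * K * φ k + C * K * φ j := by ring
      linarith
  -- expansion of the square of the ergodic average
  have hEn : ∀ n : ℕ,
      (∫ ω, ((n : ℝ)⁻¹ * (∑ k ∈ Finset.range n, f (X.M k ω))) ^ 2 ∂(X.P x))
        = ((n : ℝ)⁻¹) ^ 2 * ∑ j ∈ Finset.range n, ∑ k ∈ Finset.range n, u j k := by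
    intro n
    have hinteg : ∀ j k : ℕ, Integrable (fun ω => f (X.M j ω) * f (X.M k ω)) (X.P x) :=
      fun j k =>
        integrable_of_bdd'
          (((hmf.comp (X.measM j)).mul (hmf.comp (X.measM k))).aestronglyMeasurable)
          (C := C * C) fun ω => by
            rw [abs_mul]
            exact mul_le_mul (hC _) (hC _) (abs_nonneg _) hC0
    have h1 : ∀ ω, ((n : ℝ)⁻¹ * (∑ k ∈ Finset.range n, f (X.M k ω))) ^ 2
        = ((n : ℝ)⁻¹) ^ 2 *
          ∑ j ∈ Finset.range n, ∑ k ∈ Finset.range n, f (X.M j ω) * f (X.M k ω) := by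
      intro ω
      rw [mul_pow, sq (∑ k ∈ Finset.range n, f (X.M k ω)), Finset.sum_mul_sum]
    simp_rw [h1]
    rw [integral_const_mul]
    congr 1
    rw [integral_finset_sum _ fun j _ => integrable_finset_sum _ fun k _ => hinteg j k]
    exact Finset.sum_congr rfl fun j _ =>
      integral_finset_sum _ fun k _ => hinteg j k
  -- the vanishing bound
  set B : ℕ → ℝ := fun n => 4 * (C * K) * ((n : ℝ)⁻¹ * ∑ t ∈ Finset.range n, φ t) with hBdef
  have hBtendsto : Tendsto B atTop (𝓝 0) := by
    have h2 := hφ0.cesaro.const_mul (4 * (C * (K:ℝ)))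
    simpa using h2
  have hmain : ∀ n : ℕ, 1 ≤ n →
      |(∫ ω, ((n : ℝ)⁻¹ * (∑ k ∈ Finset.range n, f (X.M k ω))) ^ 2 ∂(X.P x)) - a ^ 2|
        ≤ B n := by
    intro n hn
    rw [hEn n]
    have hnpos : (0:ℝ) < n := by exact_mod_cast hn
    have hnne : (n:ℝ) ≠ 0 := ne_of_gt hnpos
    have h1 : ((n : ℝ)⁻¹) ^ 2 * (∑ j ∈ Finset.range n, ∑ k ∈ Finset.range n, u j k) - a ^ 2
        = ((n : ℝ)⁻¹) ^ 2 *
          ∑ j ∈ Finset.range n, ∑ k ∈ Finset.range n, (u j k - a ^ 2) := by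
      have h2 : ∑ j ∈ Finset.range n, ∑ k ∈ Finset.range n, (u j k - a ^ 2)
          = (∑ j ∈ Finset.range n, ∑ k ∈ Finset.range n, u j k) - (n:ℝ) ^ 2 * a ^ 2 := by
        rw [Finset.sum_congr rfl fun j _ => Finset.sum_sub_distrib (s := Finset.range n) _ _,
          Finset.sum_sub_distrib]
        simp [Finset.sum_const, Finset.card_range]
        ring
      rw [h2]
      field_simp
    rw [h1]
    have habs : |∑ j ∈ Finset.range n, ∑ k ∈ Finset.range n, (u j k - a ^ 2)|
        ≤ ∑ j ∈ Finset.range n, ∑ k ∈ Finset.range n, |u j k - a ^ 2| :=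
      (Finset.abs_sum_le_sum_abs _ _).trans
        (Finset.sum_le_sum fun j _ => Finset.abs_sum_le_sum_abs _ _)
    have hsum : ∑ j ∈ Finset.range n, ∑ k ∈ Finset.range n, |u j k - a ^ 2|
        ≤ C * K * (4 * n * ∑ t ∈ Finset.range n, φ t) := by
      have t1 : ∑ j ∈ Finset.range n, ∑ k ∈ Finset.range n, |u j k - a ^ 2|
          ≤ ∑ j ∈ Finset.range n, ∑ k ∈ Finset.range n,
              C * K * (φ (Nat.dist j k) + φ j + φ k) :=
        Finset.sum_le_sum fun j _ => Finset.sum_le_sum fun k _ => key2 j k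
      have t2 : ∑ j ∈ Finset.range n, ∑ k ∈ Finset.range n,
            C * K * (φ (Nat.dist j k) + φ j + φ k)
          = C * K * ∑ j ∈ Finset.range n, ∑ k ∈ Finset.range n,
              (φ (Nat.dist j k) + φ j + φ k) := by
        rw [Finset.mul_sum]
        exact Finset.sum_congr rfl fun j _ => by rw [Finset.mul_sum]
      have t3 : ∑ j ∈ Finset.range n, ∑ k ∈ Finset.range n, (φ (Nat.dist j k) + φ j + φ k)
          ≤ 4 * n * ∑ t ∈ Finset.range n, φ t := by
        have t4 : ∀ j ∈ Finset.range n,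
            ∑ k ∈ Finset.range n, (φ (Nat.dist j k) + φ j + φ k)
              ≤ 2 * (∑ t ∈ Finset.range n, φ t) + n * φ j + ∑ t ∈ Finset.range n, φ t := by
          intro j hj
          rw [Finset.sum_add_distrib, Finset.sum_add_distrib]
          have d1 := sum_dist_le n j (Finset.mem_range.mp hj) φ hφnonneg
          have d2 : ∑ _k ∈ Finset.range n, φ j = n * φ j := by
            rw [Finset.sum_const, Finset.card_range, nsmul_eq_mul]
          linarith [d1, le_of_eq d2]
        calc ∑ j ∈ Finset.range n, ∑ k ∈ Finset.range n, (φ (Nat.dist j k) + φ j + φ k)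
            ≤ ∑ j ∈ Finset.range n,
                (2 * (∑ t ∈ Finset.range n, φ t) + n * φ j + ∑ t ∈ Finset.range n, φ t) :=
              Finset.sum_le_sum t4
          _ = 4 * n * ∑ t ∈ Finset.range n, φ t := by
              rw [Finset.sum_add_distrib, Finset.sum_add_distrib, Finset.sum_const,
                Finset.sum_const, Finset.card_range, ← Finset.mul_sum]
              simp only [nsmul_eq_mul]
              ring
      calc ∑ j ∈ Finset.range n, ∑ k ∈ Finset.range n, |u j k - a ^ 2|
          ≤ C * K * ∑ j ∈ Finset.range n, ∑ k ∈ Finset.range n,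
              (φ (Nat.dist j k) + φ j + φ k) := t1.trans (le_of_eq t2)
        _ ≤ C * K * (4 * n * ∑ t ∈ Finset.range n, φ t) := by
            refine mul_le_mul_of_nonneg_left t3 ?_
            positivity
    have hB : ((n : ℝ)⁻¹) ^ 2 * (C * K * (4 * n * ∑ t ∈ Finset.range n, φ t)) = B n := by
      simp only [hBdef]
      field_simp
    calc |((n : ℝ)⁻¹) ^ 2 * ∑ j ∈ Finset.range n, ∑ k ∈ Finset.range n, (u j k - a ^ 2)|
        = ((n : ℝ)⁻¹) ^ 2 * |∑ j ∈ Finset.range n, ∑ k ∈ Finset.range n, (u j k - a ^ 2)| := by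
          rw [abs_mul, abs_of_nonneg (by positivity : (0:ℝ) ≤ ((n : ℝ)⁻¹) ^ 2)]
      _ ≤ ((n : ℝ)⁻¹) ^ 2 * (C * K * (4 * n * ∑ t ∈ Finset.range n, φ t)) := by
          refine mul_le_mul_of_nonneg_left (habs.trans hsum) (by positivity)
      _ = B n := hB
  refine tendsto_of_tendsto_of_tendsto_of_le_of_le'
    (g := fun n => a ^ 2 - B n) (h := fun n => a ^ 2 + B n) ?_ ?_ ?_ ?_
  · simpa using tendsto_const_nhds.sub hBtendsto
  · simpa using tendsto_const_nhds.add hBtendsto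
  · filter_upwards [eventually_ge_atTop 1] with n hn
    have := (abs_le.mp (hmain n hn)).1
    linarith
  · filter_upwards [eventually_ge_atTop 1] with n hn
    have := (abs_le.mp (hmain n hn)).2
    linarith
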